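/- Define the computed value of a binary-tree summation of 2^n terms a_0,…,a_{2^n−1} recursively by: S_comp of a single term is a_j(1+θ_j)+λ_j, and S_comp of a block of 2^{m+1} terms is (S_comp(left half) + S_comp(right half))(1+θ)+λ, where every θ satisfies |θ| ≤ ε and every λ satisfies |λ| ≤ δ. Then |S_comp − Σ_j a_j| ≤ ((1+ε)^{n+1} − 1)·Σ_j |a_j| + δ·Σ_{j=0}^{n} 2^j (1+ε)^j. -/
import Mathlib


/-- Computed value of a binary-tree summation: `treeComp a θL lamL θN lamN m k`
is the computed sum of the block of `2^m` terms `a (k*2^m), …, a ((k+1)*2^m - 1)`,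
with rounding `(1+θ)` and merging error `λ` at every leaf and internal node. -/
def treeComp (a θL lamL : ℕ → ℝ) (θN lamN : ℕ → ℕ → ℝ) : ℕ → ℕ → ℝ
  | 0, k => a k * (1 + θL k) + lamL k
  | m + 1, k =>
      (treeComp a θL lamL θN lamN m (2 * k) + treeComp a θL lamL θN lamN m (2 * k + 1))
        * (1 + θN m k) + lamN m k

lemma treeComp_bound (ε δ : ℝ) (hε : 0 ≤ ε) (hδ : 0 ≤ δ)
    (a θL lamL : ℕ → ℝ) (θN lamN : ℕ → ℕ → ℝ)
    (hθL : ∀ j, |θL j| ≤ ε) (hlamL : ∀ j, |lamL j| ≤ δ)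
    (hθN : ∀ m k, |θN m k| ≤ ε) (hlamN : ∀ m k, |lamN m k| ≤ δ) :
    ∀ m k, |treeComp a θL lamL θN lamN m k - ∑ j ∈ Finset.range (2 ^ m), a (k * 2 ^ m + j)|
      ≤ ((1 + ε) ^ (m + 1) - 1) * ∑ j ∈ Finset.range (2 ^ m), |a (k * 2 ^ m + j)|
        + δ * ∑ j ∈ Finset.range (m + 1), (2 : ℝ) ^ j * (1 + ε) ^ j := by
  intro m
  induction m with
  | zero =>
    intro k
    simp only [pow_zero, Nat.pow_zero, Finset.range_one, Finset.sum_singleton, mul_one,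
      Nat.mul_one, Nat.add_zero, pow_one, treeComp]
    have h1 : a k * (1 + θL k) + lamL k - a k = a k * θL k + lamL k := by ring
    rw [h1]
    have hb := abs_add_le (a k * θL k) (lamL k)
    rw [abs_mul] at hb
    have h2 := hθL k
    have h3 := hlamL k
    have h4 := abs_nonneg (a k)
    have h5 := abs_nonneg (θL k)
    simp only [zero_add, pow_one, Finset.range_one, Finset.sum_singleton, pow_zero, one_mul,
      mul_one]
    nlinarith [mul_le_mul_of_nonneg_left h2 h4]
  | succ m ih =>
    intro k
    have hL := ih (2 * k)
    have hR := ih (2 * k + 1)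
    set L := treeComp a θL lamL θN lamN m (2 * k) with hLdef
    set R := treeComp a θL lamL θN lamN m (2 * k + 1) with hRdef
    -- index rewrites
    have idxL : ∀ j, (2 * k) * 2 ^ m + j = k * 2 ^ (m + 1) + j := by
      intro j; ring_nf
    have idxR : ∀ j, (2 * k + 1) * 2 ^ m + j = k * 2 ^ (m + 1) + (2 ^ m + j) := by
      intro j; ring_nf
    have hsplit : ∀ f : ℕ → ℝ,
        ∑ j ∈ Finset.range (2 ^ (m + 1)), f (k * 2 ^ (m + 1) + j)
          = (∑ j ∈ Finset.range (2 ^ m), f ((2 * k) * 2 ^ m + j))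
            + ∑ j ∈ Finset.range (2 ^ m), f ((2 * k + 1) * 2 ^ m + j) := by
      intro f
      have h2 : 2 ^ (m + 1) = 2 ^ m + 2 ^ m := by rw [pow_succ]; ring
      rw [h2, Finset.sum_range_add]
      congr 1
      · exact Finset.sum_congr rfl fun j _ => by congr 1; ring
      · exact Finset.sum_congr rfl fun j _ => by congr 1; ring
    rw [hsplit a, hsplit (fun i => |a i|)]
    set S1 := ∑ j ∈ Finset.range (2 ^ m), a ((2 * k) * 2 ^ m + j) with hS1
    set S2 := ∑ j ∈ Finset.range (2 ^ m), a ((2 * k + 1) * 2 ^ m + j) with hS2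
    set A1 := ∑ j ∈ Finset.range (2 ^ m), |a ((2 * k) * 2 ^ m + j)| with hA1
    set A2 := ∑ j ∈ Finset.range (2 ^ m), |a ((2 * k + 1) * 2 ^ m + j)| with hA2
    set T := ∑ j ∈ Finset.range (m + 1), (2 : ℝ) ^ j * (1 + ε) ^ j with hT
    have hS1A : |S1| ≤ A1 := Finset.abs_sum_le_sum_abs _ _
    have hS2A : |S2| ≤ A2 := Finset.abs_sum_le_sum_abs _ _
    have hA1n : 0 ≤ A1 := Finset.sum_nonneg fun j _ => abs_nonneg _
    have hA2n : 0 ≤ A2 := Finset.sum_nonneg fun j _ => abs_nonneg _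
    have hTn : 0 ≤ T := Finset.sum_nonneg fun j _ => by positivity
    -- T' = 2(1+ε)T + 1
    have hT' : ∑ j ∈ Finset.range (m + 2), (2 : ℝ) ^ j * (1 + ε) ^ j
        = 2 * (1 + ε) * T + 1 := by
      have hj : ∀ j, (2 : ℝ) ^ (j + 1) * (1 + ε) ^ (j + 1)
          = 2 * (1 + ε) * ((2 : ℝ) ^ j * (1 + ε) ^ j) := fun j => by ring
      rw [Finset.sum_range_succ' (fun j => (2 : ℝ) ^ j * (1 + ε) ^ j)]
      simp only [hj, pow_zero, one_mul, mul_one]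
      rw [← Finset.mul_sum]
    show |(L + R) * (1 + θN m k) + lamN m k - (S1 + S2)| ≤ _
    have hsplitted : (L + R) * (1 + θN m k) + lamN m k - (S1 + S2)
        = ((L - S1) + (R - S2)) * (1 + θN m k) + ((S1 + S2) * θN m k + lamN m k) := by
      ring
    have hθ := hθN m k
    have hlamv := hlamN m k
    have hab1 : |(1 : ℝ) + θN m k| ≤ 1 + ε := by
      calc |(1 : ℝ) + θN m k| ≤ |(1 : ℝ)| + |θN m k| := abs_add_le _ _
        _ ≤ 1 + ε := by rw [abs_one]; linarith
    have step1 : |(L + R) * (1 + θN m k) + lamN m k - (S1 + S2)|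
        ≤ (|L - S1| + |R - S2|) * (1 + ε) + ((A1 + A2) * ε + δ) := by
      rw [hsplitted]
      calc |((L - S1) + (R - S2)) * (1 + θN m k) + ((S1 + S2) * θN m k + lamN m k)|
          ≤ |((L - S1) + (R - S2)) * (1 + θN m k)| + |(S1 + S2) * θN m k + lamN m k| :=
            abs_add_le _ _
        _ ≤ |L - S1 + (R - S2)| * |1 + θN m k| + (|S1 + S2| * |θN m k| + |lamN m k|) := by
            rw [abs_mul]
            gcongr
            calc |(S1 + S2) * θN m k + lamN m k| ≤ |(S1 + S2) * θN m k| + |lamN m k| :=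
                abs_add_le _ _
              _ = |S1 + S2| * |θN m k| + |lamN m k| := by rw [abs_mul]
        _ ≤ (|L - S1| + |R - S2|) * (1 + ε) + ((A1 + A2) * ε + δ) := by
            have e1 : |L - S1 + (R - S2)| ≤ |L - S1| + |R - S2| := abs_add_le _ _
            have e2 : |S1 + S2| ≤ A1 + A2 :=
              (abs_add_le _ _).trans (add_le_add hS1A hS2A)
            have e4 := mul_le_mul e1 hab1 (abs_nonneg _)
              (add_nonneg (abs_nonneg _) (abs_nonneg _))
            have e5 := mul_le_mul e2 hθ (abs_nonneg _) (add_nonneg hA1n hA2n)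
            have e6 := hlamN m k
            linarith
    have step2 : (|L - S1| + |R - S2|) * (1 + ε)
        ≤ (((1 + ε) ^ (m + 1) - 1) * (A1 + A2) + 2 * (δ * T)) * (1 + ε) := by
      have h1ε : (0 : ℝ) ≤ 1 + ε := by linarith
      apply mul_le_mul_of_nonneg_right _ h1ε
      calc |L - S1| + |R - S2|
          ≤ (((1 + ε) ^ (m + 1) - 1) * A1 + δ * T) + (((1 + ε) ^ (m + 1) - 1) * A2 + δ * T) :=
            add_le_add hL hR
        _ = ((1 + ε) ^ (m + 1) - 1) * (A1 + A2) + 2 * (δ * T) := by ring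
    rw [hT']
    have hpow : (1 + ε) ^ (m + 1 + 1) = (1 + ε) ^ (m + 1) * (1 + ε) := pow_succ _ _
    have hεpow : (1 : ℝ) ≤ (1 + ε) ^ (m + 1) := one_le_pow₀ (by linarith)
    nlinarith [step1, step2, mul_nonneg hδ hTn, mul_nonneg (mul_nonneg hδ hTn) hε,
      mul_nonneg (add_nonneg hA1n hA2n) hε]

theorem stmt_1 (n : ℕ) (ε δ : ℝ) (hε : 0 ≤ ε) (hδ : 0 ≤ δ)
    (a θL lamL : ℕ → ℝ) (θN lamN : ℕ → ℕ → ℝ)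
    (hθL : ∀ j, |θL j| ≤ ε) (hlamL : ∀ j, |lamL j| ≤ δ)
    (hθN : ∀ m k, |θN m k| ≤ ε) (hlamN : ∀ m k, |lamN m k| ≤ δ) :
    |treeComp a θL lamL θN lamN n 0 - ∑ j ∈ Finset.range (2 ^ n), a j|
      ≤ ((1 + ε) ^ (n + 1) - 1) * ∑ j ∈ Finset.range (2 ^ n), |a j|
        + δ * ∑ j ∈ Finset.range (n + 1), (2 : ℝ) ^ j * (1 + ε) ^ j := by
  have h := treeComp_bound ε δ hε hδ a θL lamL θN lamN hθL hlamL hθN hlamN n 0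
  simpa using h
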